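/- If a bipartite graph G contains a vertex v having at least five neighbors each of degree at least 3 in G, then G admits no 2-layer fan-planar drawing. -/

import Mathlib

variable {V : Type*}

/-- A bipartite graph with layers `X` and `Y`; each edge is a pair `(x, y)` with
`x ∈ X` and `y ∈ Y`. -/
structure BipGraph (V : Type*) where
  X : Set V
  Y : Set V
  disj : Disjoint X Y
  E : Set (V × V)
  mem_fst : ∀ e ∈ E, e.1 ∈ X
  mem_snd : ∀ e ∈ E, e.2 ∈ Y

def BipGraph.Adj (G : BipGraph V) (a b : V) : Prop := (a, b) ∈ G.E ∨ (b, a) ∈ G.E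

/-- Open neighborhood. -/
def BipGraph.nbhd (G : BipGraph V) (v : V) : Set V := {u | G.Adj v u}

noncomputable def BipGraph.deg (G : BipGraph V) (v : V) : ℕ := (G.nbhd v).ncard

/-- Two edges cross in the 2-layer drawing given by positions `px`, `py`. -/
def Cross (px py : V → ℝ) (e f : V × V) : Prop :=
  (px e.1 < px f.1 ∧ py f.2 < py e.2) ∨ (px f.1 < px e.1 ∧ py e.2 < py f.2)

/-- `(px, py)` encodes a 2-layer drawing of `G`: positions are injective on each layer. -/
def IsDrawing (G : BipGraph V) (px py : V → ℝ) : Prop :=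
  Set.InjOn px G.X ∧ Set.InjOn py G.Y

/-- A drawing is fan-planar if for each edge, all edges crossing it share a common endpoint. -/
def FanPlanar (G : BipGraph V) (px py : V → ℝ) : Prop :=
  ∀ e ∈ G.E, ∃ c : V, ∀ f ∈ G.E, Cross px py e f → f.1 = c ∨ f.2 = c

def AdmitsFanPlanar (G : BipGraph V) : Prop :=
  ∃ px py : V → ℝ, IsDrawing G px py ∧ FanPlanar G px py

/-- Three edges that pairwise share no endpoint (form a matching). -/
def PairwiseDisjoint3 (e f f' : V × V) : Prop :=
  e.1 ≠ f.1 ∧ e.1 ≠ f'.1 ∧ f.1 ≠ f'.1 ∧ e.2 ≠ f.2 ∧ e.2 ≠ f'.2 ∧ f.2 ≠ f'.2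

/-- A violating triple: `f` and `f'` both cross `e` and the three edges form a matching. -/
def ViolatingTriple (G : BipGraph V) (px py : V → ℝ) (e f f' : V × V) : Prop :=
  e ∈ G.E ∧ f ∈ G.E ∧ f' ∈ G.E ∧ Cross px py e f ∧ Cross px py e f' ∧
    PairwiseDisjoint3 e f f'

/-- Induced subgraph with a vertex deleted. -/
def BipGraph.deleteVert (G : BipGraph V) (w : V) : BipGraph V where
  X := G.X \ {w}
  Y := G.Y \ {w}
  disj := G.disj.mono Set.diff_subset Set.diff_subset
  E := {e ∈ G.E | e.1 ≠ w ∧ e.2 ≠ w}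
  mem_fst := fun e he => ⟨G.mem_fst e he.1, he.2.1⟩
  mem_snd := fun e he => ⟨G.mem_snd e he.1, he.2.2⟩

def NoIsolated (G : BipGraph V) : Prop := ∀ v ∈ G.X ∪ G.Y, (G.nbhd v).Nonempty


section Aux

private lemma BipGraph.xy_ne (G : BipGraph V) {x y : V} (hx : x ∈ G.X) (hy : y ∈ G.Y) :
    x ≠ y := fun h => Set.disjoint_left.mp G.disj hx (h ▸ hy)

/-- The opposite bipartite graph: swap the two layers. -/
def BipGraph.op (G : BipGraph V) : BipGraph V where
  X := G.Y
  Y := G.X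
  disj := G.disj.symm
  E := {e | (e.2, e.1) ∈ G.E}
  mem_fst := fun e he => G.mem_snd _ he
  mem_snd := fun e he => G.mem_fst _ he

lemma BipGraph.op_nbhd (G : BipGraph V) (u : V) : G.op.nbhd u = G.nbhd u := by
  ext w
  simp [BipGraph.nbhd, BipGraph.Adj, BipGraph.op, Set.mem_setOf_eq, or_comm]

lemma BipGraph.op_deg (G : BipGraph V) (u : V) : G.op.deg u = G.deg u := by
  simp [BipGraph.deg, BipGraph.op_nbhd]

lemma op_admits (G : BipGraph V) (h : AdmitsFanPlanar G) : AdmitsFanPlanar G.op := by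
  obtain ⟨px, py, ⟨hx, hy⟩, hF⟩ := h
  refine ⟨py, px, ⟨hy, hx⟩, ?_⟩
  intro e he
  obtain ⟨c, hc⟩ := hF (e.2, e.1) he
  refine ⟨c, fun f hf hcr => ?_⟩
  have hcr' : Cross px py (e.2, e.1) (f.2, f.1) := by
    rcases hcr with ⟨h1, h2⟩ | ⟨h1, h2⟩
    · exact Or.inr ⟨h2, h1⟩
    · exact Or.inl ⟨h2, h1⟩
  exact (hc (f.2, f.1) hf hcr').symm

lemma exists_two_nbrs (G : BipGraph V) {m : V} (v : V) (hm : m ∈ G.Y) (h : 3 ≤ G.deg m) :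
    ∃ a b, a ≠ b ∧ a ≠ v ∧ b ≠ v ∧ (a, m) ∈ G.E ∧ (b, m) ∈ G.E := by
  have h3 : 3 ≤ (G.nbhd m).ncard := h
  have hfin : (G.nbhd m).Finite := Set.finite_of_ncard_ne_zero (by omega)
  have h2 : 1 < (G.nbhd m \ {v}).ncard := by
    by_cases hvm : v ∈ G.nbhd m
    · rw [Set.ncard_diff_singleton_of_mem hvm]; omega
    · rw [Set.diff_singleton_eq_self hvm]; omega
  obtain ⟨a, b, ha, hb, hab⟩ := (Set.one_lt_ncard_iff hfin.diff).mp h2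
  obtain ⟨haN, hav⟩ := ha
  obtain ⟨hbN, hbv⟩ := hb
  have ea : (a, m) ∈ G.E := by
    rcases haN with h' | h'
    · exact absurd (G.mem_fst _ h') (fun hx => Set.disjoint_left.mp G.disj hx hm)
    · exact h'
  have eb : (b, m) ∈ G.E := by
    rcases hbN with h' | h'
    · exact absurd (G.mem_fst _ h') (fun hx => Set.disjoint_left.mp G.disj hx hm)
    · exact h'
  exact ⟨a, b, hab, by simpa using hav, by simpa using hbv, ea, eb⟩

lemma fan_core (G : BipGraph V) (px py : V → ℝ)
    (hD : IsDrawing G px py) (hF : FanPlanar G px py)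
    (v u1 u5 m1 m2 m3 : V)
    (e1 : (v, u1) ∈ G.E) (e5 : (v, u5) ∈ G.E)
    (f1 : (v, m1) ∈ G.E) (f2 : (v, m2) ∈ G.E) (f3 : (v, m3) ∈ G.E)
    (h01 : py u1 < py m1) (h12 : py m1 < py m2) (h23 : py m2 < py m3)
    (h35 : py m3 < py u5)
    (nb : ∀ m, m = m1 ∨ m = m2 ∨ m = m3 → ∃ a b : V, a ≠ b ∧ a ≠ v ∧ b ≠ v ∧
      (a, m) ∈ G.E ∧ (b, m) ∈ G.E) : False := by
  have hv : v ∈ G.X := G.mem_fst _ e1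
  -- crossing-sharing: two edges crossing the same edge at v share their X-endpoint
  have share : ∀ u0 w1 n1 w2 n2 : V, (v, u0) ∈ G.E → (w1, n1) ∈ G.E → (w2, n2) ∈ G.E →
      Cross px py (v, u0) (w1, n1) → Cross px py (v, u0) (w2, n2) → n1 ≠ n2 → w1 = w2 := by
    intro u0 w1 n1 w2 n2 he hg1 hg2 hc1 hc2 hne
    obtain ⟨c, hc⟩ := hF (v, u0) he
    have k1 : w1 = c ∨ n1 = c := hc (w1, n1) hg1 hc1
    have k2 : w2 = c ∨ n2 = c := hc (w2, n2) hg2 hc2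
    have hw1X : w1 ∈ G.X := G.mem_fst _ hg1
    have hw2X : w2 ∈ G.X := G.mem_fst _ hg2
    have hn1Y : n1 ∈ G.Y := G.mem_snd _ hg1
    have hn2Y : n2 ∈ G.Y := G.mem_snd _ hg2
    rcases k1 with k1 | k1 <;> rcases k2 with k2 | k2
    · exact k1.trans k2.symm
    · exact absurd (k1.trans k2.symm) (G.xy_ne hw1X hn2Y)
    · exact absurd (k2.trans k1.symm) (G.xy_ne hw2X hn1Y)
    · exact absurd (k1.trans k2.symm) hne
  have side : ∀ {w m : V}, (w, m) ∈ G.E → w ≠ v → px w < px v ∨ px v < px w := by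
    intro w m hw hne
    rcases lt_trichotomy (px w) (px v) with h | h | h
    · exact Or.inl h
    · exact absurd (hD.1 (G.mem_fst _ hw) hv h) hne
    · exact Or.inr h
  have shareL : ∀ {w m w' m' : V}, (w, m) ∈ G.E → (w', m') ∈ G.E → px w < px v →
      px w' < px v → py u1 < py m → py u1 < py m' → m ≠ m' → w = w' := by
    intro w m w' m' hg hg' s s' o o' ne
    exact share u1 w m w' m' e1 hg hg' (Or.inr ⟨s, o⟩) (Or.inr ⟨s', o'⟩) ne
  have shareR : ∀ {w m w' m' : V}, (w, m) ∈ G.E → (w', m') ∈ G.E → px v < px w →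
      px v < px w' → py m < py u5 → py m' < py u5 → m ≠ m' → w = w' := by
    intro w m w' m' hg hg' s s' o o' ne
    exact share u5 w m w' m' e5 hg hg' (Or.inl ⟨s, o⟩) (Or.inl ⟨s', o'⟩) ne
  -- both neighbors of some middle vertex on the left is impossible
  have noBLpair : ∀ m n n' : V, m ≠ n → m ≠ n' → n ≠ n' →
      py u1 < py m → py u1 < py n → py u1 < py n' → py n < py u5 → py n' < py u5 →
      (∃ a b : V, a ≠ b ∧ a ≠ v ∧ b ≠ v ∧ (a, n) ∈ G.E ∧ (b, n) ∈ G.E) →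
      (∃ a b : V, a ≠ b ∧ a ≠ v ∧ b ≠ v ∧ (a, n') ∈ G.E ∧ (b, n') ∈ G.E) →
      (∃ a b : V, a ≠ b ∧ (a, m) ∈ G.E ∧ (b, m) ∈ G.E ∧ px a < px v ∧ px b < px v) →
      False := by
    intro m n n' hmn hmn' hnn' hum hun hun' hn5 hn'5 hdn hdn' hBL
    obtain ⟨a, b, hab, ea, eb, ha, hb⟩ := hBL
    have rightOnly : ∀ w n0 : V, (n0 = n ∨ n0 = n') → (w, n0) ∈ G.E → w ≠ v →
        px v < px w := by
      intro w n0 hn0 hw hwv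
      rcases side hw hwv with h | h
      · exfalso
        have hmn0 : m ≠ n0 := by rcases hn0 with rfl | rfl; exacts [hmn, hmn']
        have hun0 : py u1 < py n0 := by rcases hn0 with rfl | rfl; exacts [hun, hun']
        have t1 : a = w := shareL ea hw ha h hum hun0 hmn0
        have t2 : b = w := shareL eb hw hb h hum hun0 hmn0
        exact hab (t1.trans t2.symm)
      · exact h
    obtain ⟨a', b', hab', hav', hbv', ea', eb'⟩ := hdn
    obtain ⟨a'', b'', hab'', hav'', hbv'', ea'', eb''⟩ := hdn'
    have r1 := rightOnly a' n (Or.inl rfl) ea' hav'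
    have r2 := rightOnly b' n (Or.inl rfl) eb' hbv'
    have r3 := rightOnly a'' n' (Or.inr rfl) ea'' hav''
    have t1 : a' = a'' := shareR ea' ea'' r1 r3 hn5 hn'5 hnn'
    have t2 : b' = a'' := shareR eb' ea'' r2 r3 hn5 hn'5 hnn'
    exact hab' (t1.trans t2.symm)
  -- both neighbors of some middle vertex on the right is impossible
  have noBRpair : ∀ m n n' : V, m ≠ n → m ≠ n' → n ≠ n' →
      py m < py u5 → py n < py u5 → py n' < py u5 → py u1 < py n → py u1 < py n' →
      (∃ a b : V, a ≠ b ∧ a ≠ v ∧ b ≠ v ∧ (a, n) ∈ G.E ∧ (b, n) ∈ G.E) →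
      (∃ a b : V, a ≠ b ∧ a ≠ v ∧ b ≠ v ∧ (a, n') ∈ G.E ∧ (b, n') ∈ G.E) →
      (∃ a b : V, a ≠ b ∧ (a, m) ∈ G.E ∧ (b, m) ∈ G.E ∧ px v < px a ∧ px v < px b) →
      False := by
    intro m n n' hmn hmn' hnn' hum hun hun' hn1 hn'1 hdn hdn' hBR
    obtain ⟨a, b, hab, ea, eb, ha, hb⟩ := hBR
    have leftOnly : ∀ w n0 : V, (n0 = n ∨ n0 = n') → (w, n0) ∈ G.E → w ≠ v →
        px w < px v := by
      intro w n0 hn0 hw hwv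
      rcases side hw hwv with h | h
      · exact h
      · exfalso
        have hmn0 : m ≠ n0 := by rcases hn0 with rfl | rfl; exacts [hmn, hmn']
        have hun0 : py n0 < py u5 := by rcases hn0 with rfl | rfl; exacts [hun, hun']
        have t1 : a = w := shareR ea hw ha h hum hun0 hmn0
        have t2 : b = w := shareR eb hw hb h hum hun0 hmn0
        exact hab (t1.trans t2.symm)
    obtain ⟨a', b', hab', hav', hbv', ea', eb'⟩ := hdn
    obtain ⟨a'', b'', hab'', hav'', hbv'', ea'', eb''⟩ := hdn'
    have r1 := leftOnly a' n (Or.inl rfl) ea' hav'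
    have r2 := leftOnly b' n (Or.inl rfl) eb' hbv'
    have r3 := leftOnly a'' n' (Or.inr rfl) ea'' hav''
    have t1 : a' = a'' := shareL ea' ea'' r1 r3 hn1 hn'1 hnn'
    have t2 : b' = a'' := shareL eb' ea'' r2 r3 hn1 hn'1 hnn'
    exact hab' (t1.trans t2.symm)
  -- shorthand notation for bounds and distinctness
  have pym1 : py u1 < py m1 := h01
  have pym2 : py u1 < py m2 := h01.trans h12
  have pym3 : py u1 < py m3 := pym2.trans h23
  have pyn3 : py m3 < py u5 := h35
  have pyn2 : py m2 < py u5 := h23.trans h35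
  have pyn1 : py m1 < py u5 := h12.trans pyn2
  have ne12 : m1 ≠ m2 := fun h => absurd (h ▸ h12) (lt_irrefl _)
  have ne23 : m2 ≠ m3 := fun h => absurd (h ▸ h23) (lt_irrefl _)
  have ne13 : m1 ≠ m3 := fun h => absurd (h ▸ (h12.trans h23)) (lt_irrefl _)
  have nb1 := nb m1 (Or.inl rfl)
  have nb2 := nb m2 (Or.inr (Or.inl rfl))
  have nb3 := nb m3 (Or.inr (Or.inr rfl))
  -- each middle vertex has a left neighbor and a right neighbor
  have getMixed : ∀ m n n' : V, m ≠ n → m ≠ n' → n ≠ n' →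
      py u1 < py m → py u1 < py n → py u1 < py n' →
      py m < py u5 → py n < py u5 → py n' < py u5 →
      (∃ a b : V, a ≠ b ∧ a ≠ v ∧ b ≠ v ∧ (a, m) ∈ G.E ∧ (b, m) ∈ G.E) →
      (∃ a b : V, a ≠ b ∧ a ≠ v ∧ b ≠ v ∧ (a, n) ∈ G.E ∧ (b, n) ∈ G.E) →
      (∃ a b : V, a ≠ b ∧ a ≠ v ∧ b ≠ v ∧ (a, n') ∈ G.E ∧ (b, n') ∈ G.E) →
      ∃ c d : V, (c, m) ∈ G.E ∧ (d, m) ∈ G.E ∧ px c < px v ∧ px v < px d := by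
    intro m n n' hmn hmn' hnn' hum hun hun' hm5 hn5 hn'5 hdm hdn hdn'
    obtain ⟨a, b, hab, hav, hbv, ea, eb⟩ := hdm
    rcases side ea hav with ha | ha <;> rcases side eb hbv with hb | hb
    · exact absurd ⟨a, b, hab, ea, eb, ha, hb⟩
        (fun h => noBLpair m n n' hmn hmn' hnn' hum hun hun' hn5 hn'5 hdn hdn' h)
    · exact ⟨a, b, ea, eb, ha, hb⟩
    · exact ⟨b, a, eb, ea, hb, ha⟩
    · exact absurd ⟨a, b, hab, ea, eb, ha, hb⟩
        (fun h => noBRpair m n n' hmn hmn' hnn' hm5 hn5 hn'5 hun hun' hdn hdn' h)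
  obtain ⟨c1, d1, ec1, ed1, hc1, hd1⟩ := getMixed m1 m2 m3 ne12 ne13 ne23
    pym1 pym2 pym3 pyn1 pyn2 pyn3 nb1 nb2 nb3
  obtain ⟨c2, d2, ec2, ed2, hc2, hd2⟩ := getMixed m2 m1 m3 ne12.symm ne23 ne13
    pym2 pym1 pym3 pyn2 pyn1 pyn3 nb2 nb1 nb3
  -- all left neighbors coincide, all right neighbors coincide
  have hcc : c1 = c2 := shareL ec1 ec2 hc1 hc2 pym1 pym2 ne12
  -- final fan-planarity contradiction at the edge (c2, m2)
  obtain ⟨c0, hc0⟩ := hF (c2, m2) ec2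
  have k1 : v = c0 ∨ u1 = c0 := hc0 (v, u1) e1 (Or.inl ⟨hc2, h01.trans h12⟩)
  have k2 : v = c0 ∨ m1 = c0 := hc0 (v, m1) f1 (Or.inl ⟨hc2, h12⟩)
  have k3 : d1 = c0 ∨ m1 = c0 := hc0 (d1, m1) ed1 (Or.inl ⟨hc2.trans hd1, h12⟩)
  have hm1Y : m1 ∈ G.Y := G.mem_snd _ f1
  have hu1Y : u1 ∈ G.Y := G.mem_snd _ e1
  have hvd1 : v ≠ d1 := fun h => absurd (h ▸ hd1) (lt_irrefl _)
  have hvm1 : v ≠ m1 := G.xy_ne hv hm1Y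
  have hu1v : u1 ≠ v := (G.xy_ne hv hu1Y).symm
  have hu1m1 : u1 ≠ m1 := fun h => absurd (h ▸ h01) (lt_irrefl _)
  rcases k1 with k1 | k1
  · rcases k3 with k3 | k3
    · exact hvd1 (k1.trans k3.symm)
    · exact hvm1 (k1.trans k3.symm)
  · rcases k2 with k2 | k2
    · exact hu1v (k1.trans k2.symm)
    · exact hu1m1 (k1.trans k2.symm)

lemma main_lemma (G : BipGraph V) (v : V) (S : Set V) (hSE : ∀ u ∈ S, (v, u) ∈ G.E)
    (hcard : 5 ≤ S.ncard) (hdeg : ∀ u ∈ S, 3 ≤ G.deg u) : ¬ AdmitsFanPlanar G := by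
  rintro ⟨px, py, hD, hF⟩
  obtain ⟨T, hTS, hT5⟩ := Set.exists_subset_card_eq hcard
  have hTfin : T.Finite := Set.finite_of_ncard_ne_zero (by omega)
  have hTY : ∀ u ∈ T, u ∈ G.Y := fun u hu => G.mem_snd _ (hSE u (hTS hu))
  have hinj : Set.InjOn py T := fun a ha b hb h => hD.2 (hTY a ha) (hTY b hb) h
  have hFtc : hTfin.toFinset.card = 5 := by
    rw [← Set.ncard_eq_toFinset_card T hTfin]; exact hT5
  have hFcard : (hTfin.toFinset.image py).card = 5 := by
    rw [Finset.card_image_of_injOn (by rw [Set.Finite.coe_toFinset]; exact hinj)]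
    exact hFtc
  set e := (hTfin.toFinset.image py).orderEmbOfFin hFcard with he
  have hmem : ∀ i : Fin 5, ∃ u ∈ T, py u = e i := by
    intro i
    have := (hTfin.toFinset.image py).orderEmbOfFin_mem hFcard i
    obtain ⟨u, hu, hpy⟩ := Finset.mem_image.mp this
    exact ⟨u, hTfin.mem_toFinset.mp hu, hpy⟩
  obtain ⟨w0, hw0, hp0⟩ := hmem 0
  obtain ⟨w1, hw1, hp1⟩ := hmem 1
  obtain ⟨w2, hw2, hp2⟩ := hmem 2
  obtain ⟨w3, hw3, hp3⟩ := hmem 3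
  obtain ⟨w4, hw4, hp4⟩ := hmem 4
  have emono : StrictMono e := OrderEmbedding.strictMono e
  have o01 : py w0 < py w1 := by rw [hp0, hp1]; exact emono (by decide)
  have o12 : py w1 < py w2 := by rw [hp1, hp2]; exact emono (by decide)
  have o23 : py w2 < py w3 := by rw [hp2, hp3]; exact emono (by decide)
  have o34 : py w3 < py w4 := by rw [hp3, hp4]; exact emono (by decide)
  have hS0 := hTS hw0
  have hS1 := hTS hw1
  have hS2 := hTS hw2
  have hS3 := hTS hw3
  have hS4 := hTS hw4
  exact fan_core G px py hD hF v w0 w4 w1 w2 w3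
    (hSE _ hS0) (hSE _ hS4) (hSE _ hS1) (hSE _ hS2) (hSE _ hS3)
    o01 o12 o23 o34
    (by
      rintro m (rfl | rfl | rfl)
      · exact exists_two_nbrs G v (hTY _ hw1) (hdeg _ hS1)
      · exact exists_two_nbrs G v (hTY _ hw2) (hdeg _ hS2)
      · exact exists_two_nbrs G v (hTY _ hw3) (hdeg _ hS3))

end Aux

/-- A vertex with at least five neighbors of degree at least 3 forbids
a 2-layer fan-planar drawing. -/
theorem stmt2 (G : BipGraph V) (v : V) (S : Set V) (hS : S ⊆ G.nbhd v)
    (hcard : 5 ≤ S.ncard) (hdeg : ∀ u ∈ S, 3 ≤ G.deg u) :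
    ¬ AdmitsFanPlanar G := by
  intro hA
  have hne : S.Nonempty := Set.nonempty_of_ncard_ne_zero (by omega)
  obtain ⟨u0, hu0⟩ := hne
  rcases hS hu0 with h | h
  · -- v ∈ G.X
    have hv : v ∈ G.X := G.mem_fst _ h
    refine main_lemma G v S ?_ hcard hdeg hA
    intro u hu
    rcases hS hu with h' | h'
    · exact h'
    · exact absurd hv (fun hx => Set.disjoint_left.mp G.disj hx (G.mem_snd _ h'))
  · -- v ∈ G.Y, pass to the opposite graph
    have hv : v ∈ G.Y := G.mem_snd _ h
    refine main_lemma G.op v S ?_ hcard ?_ (op_admits G hA)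
    · intro u hu
      rcases hS hu with h' | h'
      · exact absurd hv (fun hy => Set.disjoint_left.mp G.disj (G.mem_fst _ h') hy)
      · exact h'
    · intro u hu
      rw [BipGraph.op_deg]
      exact hdeg u hu
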